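/- Let V be a vertex algebra with elements ω and J whose modes satisfy [ω_i, J_j] = (3i − j)J_{i+j−1} for all i, j ∈ ℤ, acting on a module M. Fix w ∈ M, p ∈ ℕ, positive integers s₁,…,s_p, j ∈ ℤ, and i₁,…,i_p ∈ ℕ with i_k ≤ s_k for all k. Let e = ∑_{k=1}^p (s_k − i_k). Then J_{j+e} ω_{i_p} ⋯ ω_{i_1} w lies in the span of vectors of the form ω_{a_1} ⋯ ω_{a_m} J_i w with m ∈ ℕ, a_1,…,a_m ∈ ℤ, and i ≥ j. -/

import Mathlib

theorem stmt9 {M : Type*} [AddCommGroup M] [Module ℂ M]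
    (ω J : ℤ → Module.End ℂ M)
    (hrel : ∀ i j : ℤ, ω i * J j - J j * ω i = ((3 * i - j : ℤ) : ℂ) • J (i + j - 1))
    (w : M) (p : ℕ) (sv iv : Fin p → ℤ)
    (hs : ∀ k, 0 < sv k) (hi0 : ∀ k, 0 ≤ iv k) (his : ∀ k, iv k ≤ sv k)
    (j : ℤ) :
    J (j + ∑ k, (sv k - iv k)) (List.foldl (fun v a => ω a v) w (List.ofFn iv)) ∈
      Submodule.span ℂ {v : M | ∃ (l : List ℤ) (i : ℤ), j ≤ i ∧
        v = List.foldr (fun a u => ω a u) (J i w) l} := by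
  set S : ℤ → Set M := fun j => {v : M | ∃ (l : List ℤ) (i : ℤ), j ≤ i ∧
        v = List.foldr (fun a u => ω a u) (J i w) l} with hS
  have mono : ∀ j j' : ℤ, j ≤ j' → Submodule.span ℂ (S j') ≤ Submodule.span ℂ (S j) := by
    intro j j' h
    apply Submodule.span_mono
    rintro x ⟨l, i, hi, hx⟩
    exact ⟨l, i, h.trans hi, hx⟩
  have stab : ∀ (j b : ℤ) (x : M), x ∈ Submodule.span ℂ (S j) →
      ω b x ∈ Submodule.span ℂ (S j) := by
    intro j b x hx
    induction hx using Submodule.span_induction with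
    | mem y hy =>
      obtain ⟨l, i, hi, rfl⟩ := hy
      exact Submodule.subset_span ⟨b :: l, i, hi, rfl⟩
    | zero => simp
    | add y z _ _ hy hz => rw [map_add]; exact Submodule.add_mem _ hy hz
    | smul c y _ hy => rw [map_smul]; exact Submodule.smul_mem _ _ hy
  suffices h : ∀ (p : ℕ) (sv iv : Fin p → ℤ), (∀ k, 0 < sv k) → (∀ k, iv k ≤ sv k) →
      ∀ j : ℤ, J (j + ∑ k, (sv k - iv k)) (List.foldl (fun v a => ω a v) w (List.ofFn iv)) ∈
        Submodule.span ℂ (S j) by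
    exact h p sv iv hs his j
  clear hs his hi0 j sv iv p
  intro p
  induction p with
  | zero =>
    intro sv iv _ _ j
    simp only [Finset.univ_eq_empty, Finset.sum_empty, add_zero, List.ofFn_zero, List.foldl_nil]
    exact Submodule.subset_span ⟨[], j, le_refl j, rfl⟩
  | succ p ih =>
    intro sv iv hs his j
    set a := iv (Fin.last p) with ha
    set s := sv (Fin.last p) with hsdef
    set e' := ∑ k : Fin p, (sv k.castSucc - iv k.castSucc) with he'
    set v := List.foldl (fun v a => ω a v) w (List.ofFn fun k : Fin p => iv k.castSucc) with hv
    have hsum : ∑ k, (sv k - iv k) = e' + (s - a) := by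
      rw [he', Fin.sum_univ_castSucc]
    have hfold : List.foldl (fun v a => ω a v) w (List.ofFn iv) = ω a v := by
      rw [List.ofFn_succ', List.concat_eq_append, List.foldl_append]
      simp [hv]
      rfl
    rw [hsum, hfold]
    set N := j + (e' + (s - a)) with hN
    have key : J N (ω a v) = ω a (J N v) - ((3 * a - N : ℤ) : ℂ) • J (a + N - 1) v := by
      have h := hrel a N
      have h2 := congrArg (fun f => f v) h
      simp only [LinearMap.sub_apply, Module.End.mul_apply, LinearMap.smul_apply] at h2
      rw [← h2, sub_sub_cancel]
    rw [key]
    apply Submodule.sub_mem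
    · -- ω a (J N v)
      apply stab
      have h1 := ih (fun k => sv k.castSucc) (fun k => iv k.castSucc)
        (fun k => hs k.castSucc) (fun k => his k.castSucc) (j + (s - a))
      have heq : j + (s - a) + ∑ k : Fin p, (sv k.castSucc - iv k.castSucc) = N := by
        rw [hN, he']; ring
      rw [heq] at h1
      exact mono j (j + (s - a)) (by have := his (Fin.last p); omega) h1
    · apply Submodule.smul_mem
      have h1 := ih (fun k => sv k.castSucc) (fun k => iv k.castSucc)
        (fun k => hs k.castSucc) (fun k => his k.castSucc) (j + (s - 1))
      have heq : j + (s - 1) + ∑ k : Fin p, (sv k.castSucc - iv k.castSucc) = a + N - 1 := by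
        rw [hN, he']; ring
      rw [heq] at h1
      exact mono j (j + (s - 1)) (by have := hs (Fin.last p); omega) h1
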